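/- arXiv:2602.22467 — 4 statements merged into one kernel-verified Lean document; each statement's English description precedes it below -/
import Mathlib

section
/- Let b : ℝ → ℝ be twice continuously differentiable, let u₀ : ℝ → ℝ, and let γ : ℝ × [0,∞) → ℝ be twice continuously differentiable with γ(x,0) = x and ∂ₜγ(x,0) = u₀(x) for all x ∈ ℝ. If γ satisfies the Euler–Lagrange equation ∂ₓγ · b''(∂ₜγ) · ∂ₜₜγ + 2 b'(∂ₜγ) · ∂ₜ∂ₓγ = 0 at every point of ℝ × [0,∞), then b'(∂ₜγ(x,t)) · (∂ₓγ(x,t))² = b'(u₀(x)) for every x ∈ ℝ and every t ≥ 0. -/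
/-- If the C² path `γ` (with `γ(x,0) = x`, `∂ₜγ(x,0) = u₀(x)`) satisfies the
Euler–Lagrange equation `γ_x b''(γ_t) γ_tt + 2 b'(γ_t) γ_tx = 0` on `ℝ × [0,∞)`,
then `b'(γ_t) γ_x² = b'(u₀)` there. -/
theorem stmt0
    (b u₀ : ℝ → ℝ) (γ : ℝ → ℝ → ℝ)
    (hb : ContDiff ℝ 2 b)
    (hγ : ContDiff ℝ 2 (Function.uncurry γ))
    (hinit : ∀ x : ℝ, γ x 0 = x)
    (hvel : ∀ x : ℝ, deriv (γ x) 0 = u₀ x)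
    (hEL : ∀ x t : ℝ, 0 ≤ t →
      deriv (fun y => γ y t) x * deriv (deriv b) (deriv (γ x) t) *
          deriv (deriv (γ x)) t
        + 2 * deriv b (deriv (γ x) t) *
          deriv (fun s => deriv (fun y => γ y s) x) t = 0) :
    ∀ x t : ℝ, 0 ≤ t →
      deriv b (deriv (γ x) t) * (deriv (fun y => γ y t) x) ^ 2
        = deriv b (u₀ x) := by
  intro x t ht
  set f := Function.uncurry γ with hfdef
  have hfd : Differentiable ℝ f := hγ.differentiable (by norm_num)
  have hfderiv : ContDiff ℝ 1 (fun p : ℝ × ℝ => fderiv ℝ f p) :=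
    hγ.fderiv_right (by norm_num)
  set g : ℝ × ℝ → ℝ := fun p => fderiv ℝ f p (0, 1) with hgdef
  set h : ℝ × ℝ → ℝ := fun p => fderiv ℝ f p (1, 0) with hhdef
  have hgC : ContDiff ℝ 1 g :=
    (ContinuousLinearMap.apply ℝ ℝ ((0 : ℝ), (1 : ℝ))).contDiff.comp hfderiv
  have hhC : ContDiff ℝ 1 h :=
    (ContinuousLinearMap.apply ℝ ℝ ((1 : ℝ), (0 : ℝ))).contDiff.comp hfderiv
  -- ∂ₜγ = g
  have key : ∀ y s : ℝ, HasDerivAt (γ y) (g (y, s)) s := by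
    intro y s
    have h1 : HasDerivAt (fun s : ℝ => ((y : ℝ), s)) ((0 : ℝ), (1 : ℝ)) s :=
      (hasDerivAt_const s y).prodMk (hasDerivAt_id s)
    have h2 := (hfd (y, s)).hasFDerivAt.comp_hasDerivAt s h1
    exact h2
  -- ∂ₓγ = h
  have keyx : ∀ y s : ℝ, HasDerivAt (fun z => γ z s) (h (y, s)) y := by
    intro y s
    have h1 : HasDerivAt (fun z : ℝ => (z, s)) ((1 : ℝ), (0 : ℝ)) y :=
      (hasDerivAt_id y).prodMk (hasDerivAt_const y s)
    have h2 := (hfd (y, s)).hasFDerivAt.comp_hasDerivAt y h1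
    exact h2
  have hG : ∀ y s : ℝ, deriv (γ y) s = g (y, s) := fun y s => (key y s).deriv
  have hH : ∀ y s : ℝ, deriv (fun z => γ z s) y = h (y, s) := fun y s => (keyx y s).deriv
  set G : ℝ → ℝ := fun s => g (x, s) with hGdef
  set H : ℝ → ℝ := fun s => h (x, s) with hHdef
  set Gd : ℝ → ℝ := fun s => fderiv ℝ g (x, s) (0, 1) with hGddef
  set Hd : ℝ → ℝ := fun s => fderiv ℝ h (x, s) (0, 1) with hHddef
  have hGd : ∀ s : ℝ, HasDerivAt G (Gd s) s := by
    intro s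
    have h1 : HasDerivAt (fun s : ℝ => ((x : ℝ), s)) ((0 : ℝ), (1 : ℝ)) s :=
      (hasDerivAt_const s x).prodMk (hasDerivAt_id s)
    exact ((hgC.differentiable one_ne_zero) (x, s)).hasFDerivAt.comp_hasDerivAt s h1
  have hHd : ∀ s : ℝ, HasDerivAt H (Hd s) s := by
    intro s
    have h1 : HasDerivAt (fun s : ℝ => ((x : ℝ), s)) ((0 : ℝ), (1 : ℝ)) s :=
      (hasDerivAt_const s x).prodMk (hasDerivAt_id s)
    exact ((hhC.differentiable one_ne_zero) (x, s)).hasFDerivAt.comp_hasDerivAt s h1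
  -- b' is C¹
  have hb' : ContDiff ℝ 1 (deriv b) := by
    have : ContDiff ℝ (1 + 1) b := by exact_mod_cast hb
    exact (contDiff_succ_iff_deriv.mp this).2.2
  have hb2 : ∀ u : ℝ, HasDerivAt (deriv b) (deriv (deriv b) u) u := fun u =>
    ((hb'.differentiable one_ne_zero) u).hasDerivAt
  -- the conserved quantity
  set F : ℝ → ℝ := fun s => deriv b (G s) * (H s) ^ 2 with hFdef
  -- translate the EL equation
  have hel : ∀ s : ℝ, 0 ≤ s →
      H s * deriv (deriv b) (G s) * Gd s + 2 * deriv b (G s) * Hd s = 0 := by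
    intro s hs
    have e1 : deriv (γ x) = G := funext fun s => hG x s
    have e2 : (fun s' => deriv (fun y => γ y s') x) = H := funext fun s' => hH x s'
    have := hEL x s hs
    rw [e1, e2, hH x s, (hGd s).deriv, (hHd s).deriv] at this
    simpa using this
  have hFd : ∀ s : ℝ, 0 ≤ s → HasDerivAt F 0 s := by
    intro s hs
    have h1 : HasDerivAt (fun u => deriv b (G u)) (deriv (deriv b) (G s) * Gd s) s :=
      (hb2 (G s)).comp s (hGd s)
    have h2 : HasDerivAt (fun u => (H u) ^ 2) (2 * H s * Hd s) s := by
      have := (hHd s).pow 2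
      exact this.congr_deriv (by norm_num)
    have h3 := h1.mul h2
    have h4 : deriv (deriv b) (G s) * Gd s * H s ^ 2 +
        deriv b (G s) * (2 * H s * Hd s) = 0 := by
      linear_combination H s * (hel s hs)
    rw [h4] at h3
    exact h3
  -- F is differentiable hence continuous
  have hFdiff : Differentiable ℝ F := by
    have hg1 : Differentiable ℝ G := fun s => ((hGd s).differentiableAt)
    have hh1 : Differentiable ℝ H := fun s => ((hHd s).differentiableAt)
    exact ((hb'.differentiable one_ne_zero).comp hg1).mul (hh1.pow 2)
  have hconst : F t = F 0 := by
    have := constant_of_has_deriv_right_zero (f := F) (a := 0) (b := t)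
      (hFdiff.continuous.continuousOn)
      (fun s hs => ((hFd s hs.1).hasDerivWithinAt))
      t (Set.mem_Icc.mpr ⟨ht, le_rfl⟩)
    exact this
  -- compute F 0
  have hG0 : G 0 = u₀ x := by
    show g (x, 0) = u₀ x
    rw [← hG x 0]; exact hvel x
  have hH0 : H 0 = 1 := by
    show h (x, 0) = 1
    rw [← hH x 0]
    have : (fun z => γ z 0) = fun z => z := funext fun z => hinit z
    rw [this, deriv_id'']
  have hF0 : F 0 = deriv b (u₀ x) := by
    simp [hFdef, hG0, hH0]
  calc deriv b (deriv (γ x) t) * (deriv (fun y => γ y t) x) ^ 2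
      = F t := by rw [hG x t, hH x t]
    _ = F 0 := hconst
    _ = deriv b (u₀ x) := hF0
end

section
/- Let p : (0,∞) → ℝ be C¹ and define b(r,s,q) = q r²/(2s) + (1/s)·∫₁ˢ p(q/σ) dσ for r ∈ ℝ, s > 0, q > 0. Then b is C² in (r,s,q), and for all r ∈ ℝ, s > 0, q > 0 and all real numbers T, X, Y, D: b_rr(r,s,q)·T + 2(b_rs(r,s,q) + b_r(r,s,q)/s)·X + (b_ss(r,s,q) + 2 b_s(r,s,q)/s)·Y + D·(b_sq(r,s,q) + b_q(r,s,q)/s) = (1/s)·[ q·T − p'(q/s)·(q/s²)·Y + D·p'(q/s)/s ]. -/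
open Set intervalIntegral MeasureTheory Filter Topology

noncomputable def Pfun (p : ℝ → ℝ) (x : ℝ) : ℝ := ∫ u in (1:ℝ)..x, p u / u ^ 2

lemma uIcc_sub_Ioi {a b : ℝ} (ha : 0 < a) (hb : 0 < b) : uIcc a b ⊆ Ioi 0 := by
  rw [uIcc]
  intro x hx
  exact lt_of_lt_of_le (lt_min ha hb) hx.1

section aux
variable {p : ℝ → ℝ} (hp : ContDiffOn ℝ 1 p (Set.Ioi 0))
include hp

lemma cont_integrand : ContinuousOn (fun u => p u / u ^ 2) (Ioi (0:ℝ)) :=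
  (hp.continuousOn).div (by fun_prop) (fun x hx => ne_of_gt (pow_pos hx 2))

lemma g_intInt {a b : ℝ} (ha : 0 < a) (hb : 0 < b) :
    IntervalIntegrable (fun u => p u / u ^ 2) volume a b :=
  ContinuousOn.intervalIntegrable ((cont_integrand hp).mono (uIcc_sub_Ioi ha hb))

lemma Pfun_hasDerivAt {x : ℝ} (hx : 0 < x) :
    HasDerivAt (Pfun p) (p x / x ^ 2) x := by
  apply intervalIntegral.integral_hasDerivAt_right
  · exact g_intInt hp one_pos hx
  · exact (cont_integrand hp).stronglyMeasurableAtFilter isOpen_Ioi x hx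
  · exact (cont_integrand hp).continuousAt (Ioi_mem_nhds hx)

lemma Pfun_contDiffOn : ContDiffOn ℝ 2 (Pfun p) (Ioi (0:ℝ)) := by
  rw [show (2 : WithTop ℕ∞) = 1 + 1 from rfl, contDiffOn_succ_iff_deriv_of_isOpen isOpen_Ioi]
  refine ⟨fun x hx => ((Pfun_hasDerivAt hp hx).differentiableAt).differentiableWithinAt,
    by simp, ?_⟩
  apply ContDiffOn.congr (f := fun x => p x / x ^ 2)
  · exact hp.div (contDiff_id.pow 2).contDiffOn (fun x hx => ne_of_gt (pow_pos hx 2))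
  · intro x hx
    exact (Pfun_hasDerivAt hp hx).deriv

lemma integral_eq {s q : ℝ} (hs : 0 < s) (hq : 0 < q) :
    ∫ σ in (1:ℝ)..s, p (q / σ) = q * (Pfun p q - Pfun p (q / s)) := by
  have hsub : uIcc (1:ℝ) s ⊆ Ioi 0 := uIcc_sub_Ioi one_pos hs
  have key := intervalIntegral.integral_comp_smul_deriv' (a := (1:ℝ)) (b := s)
    (f := fun σ => q / σ) (f' := fun σ => -q / σ ^ 2) (g := fun u => p u / u ^ 2)
    (fun x hx => by
      have hx0 : x ≠ 0 := ne_of_gt (hsub hx)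
      simpa [div_eq_mul_inv, mul_comm, pow_two] using
        ((hasDerivAt_inv hx0).const_mul q))
    (by
      apply ContinuousOn.div continuousOn_const (by fun_prop)
      exact fun x hx => ne_of_gt (pow_pos (hsub hx) 2))
    (by
      apply (cont_integrand hp).mono
      rintro u ⟨x, hx, rfl⟩
      exact div_pos hq (hsub hx))
  have lhs_eq : (∫ x in (1:ℝ)..s, (-q / x ^ 2) • ((fun u => p u / u ^ 2) ∘ fun σ => q / σ) x)
      = ∫ x in (1:ℝ)..s, (-(1/q)) * p (q / x) := by
    apply intervalIntegral.integral_congr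
    intro x hx
    have hx0 : (0:ℝ) < x := hsub hx
    have hx0' : x ≠ 0 := hx0.ne'
    have hq0' : q ≠ 0 := hq.ne'
    simp only [Function.comp_apply, smul_eq_mul]
    field_simp
  rw [lhs_eq] at key
  rw [intervalIntegral.integral_const_mul] at key
  simp only [div_one] at key
  have adj : (∫ u in (1:ℝ)..q, p u / u ^ 2) + (∫ u in q..(q/s), p u / u ^ 2)
      = ∫ u in (1:ℝ)..(q/s), p u / u ^ 2 :=
    intervalIntegral.integral_add_adjacent_intervals (g_intInt hp one_pos hq)
      (g_intInt hp hq (div_pos hq hs))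
  have hqne : q ≠ 0 := ne_of_gt hq
  have h2 : -(1/q) * ∫ σ in (1:ℝ)..s, p (q / σ)
      = Pfun p (q/s) - Pfun p q := by
    rw [key]; unfold Pfun; linarith
  field_simp at h2
  unfold Pfun at *
  linarith

end aux


set_option maxHeartbeats 2000000 in
/-- For `b(r,s,q) = q r²/(2s) + (1/s)∫₁ˢ p(q/σ) dσ` (with `p` C¹ on `(0,∞)`),
`b` is C² on `ℝ × (0,∞) × (0,∞)`, and the Euler–Lagrange expression
`b_rr T + 2(b_rs + b_r/s) X + (b_ss + 2b_s/s) Y + D (b_sq + b_q/s)` equals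
`(1/s)(q T − p'(q/s)(q/s²) Y + D p'(q/s)/s)`: the extremals of the corresponding action are
the solutions of the isentropic gas dynamics particle-path equation. -/
theorem stmt11
    (p : ℝ → ℝ) (b : ℝ → ℝ → ℝ → ℝ)
    (hp : ContDiffOn ℝ 1 p (Set.Ioi 0))
    (hbdef : ∀ r s q : ℝ, b r s q
      = q * r ^ 2 / (2 * s) + (1 / s) * ∫ σ in (1:ℝ)..s, p (q / σ)) :
    ContDiffOn ℝ 2 (fun P : ℝ × ℝ × ℝ => b P.1 P.2.1 P.2.2)
      (Set.univ ×ˢ Set.Ioi 0 ×ˢ Set.Ioi 0)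
    ∧ ∀ r s q T X Y D : ℝ, 0 < s → 0 < q →
      deriv (fun r' => deriv (fun r'' => b r'' s q) r') r * T
      + 2 * (deriv (fun s' => deriv (fun r' => b r' s' q) r) s
          + deriv (fun r' => b r' s q) r / s) * X
      + (deriv (fun s' => deriv (fun s'' => b r s'' q) s') s
          + 2 * deriv (fun s' => b r s' q) s / s) * Y
      + D * (deriv (fun q' => deriv (fun s' => b r s' q') s) q
          + deriv (fun q' => b r s q') q / s)
      = (1 / s) * (q * T - deriv p (q / s) * (q / s ^ 2) * Y
          + D * deriv p (q / s) / s) := by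
  have hbB : ∀ r s q : ℝ, 0 < s → 0 < q → b r s q
      = q * r ^ 2 / (2 * s) + (1 / s) * (q * (Pfun p q - Pfun p (q / s))) := by
    intro r s q hs hq
    rw [hbdef, integral_eq hp hs hq]
  constructor
  ·
    set S : Set (ℝ × ℝ × ℝ) := Set.univ ×ˢ Set.Ioi 0 ×ˢ Set.Ioi 0 with hS
    have hs_mem : ∀ z : ℝ × ℝ × ℝ, z ∈ S → 0 < z.2.1 ∧ 0 < z.2.2 := by
      intro z hz
      exact ⟨hz.2.1, hz.2.2⟩
    have hq2 : ContDiffOn ℝ 2 (fun z : ℝ × ℝ × ℝ => z.2.2) S :=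
      (contDiff_snd.comp contDiff_snd).contDiffOn
    have hs1 : ContDiffOn ℝ 2 (fun z : ℝ × ℝ × ℝ => z.2.1) S :=
      (contDiff_fst.comp contDiff_snd).contDiffOn
    have hr1 : ContDiffOn ℝ 2 (fun z : ℝ × ℝ × ℝ => z.1) S := contDiff_fst.contDiffOn
    have hdiv : ContDiffOn ℝ 2 (fun z : ℝ × ℝ × ℝ => z.2.2 / z.2.1) S :=
      hq2.div hs1 (fun z hz => ne_of_gt (hs_mem z hz).1)
    have hPq : ContDiffOn ℝ 2 (fun z : ℝ × ℝ × ℝ => Pfun p z.2.2) S :=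
      (Pfun_contDiffOn hp).comp hq2 (fun z hz => (hs_mem z hz).2)
    have hPqs : ContDiffOn ℝ 2 (fun z : ℝ × ℝ × ℝ => Pfun p (z.2.2 / z.2.1)) S :=
      (Pfun_contDiffOn hp).comp hdiv
        (fun z hz => div_pos (hs_mem z hz).2 (hs_mem z hz).1)
    have hB : ContDiffOn ℝ 2 (fun z : ℝ × ℝ × ℝ =>
        z.2.2 * z.1 ^ 2 / (2 * z.2.1)
          + (1 / z.2.1) * (z.2.2 * (Pfun p z.2.2 - Pfun p (z.2.2 / z.2.1)))) S := by
      apply ContDiffOn.add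
      · exact (hq2.mul (hr1.pow 2)).div (contDiffOn_const.mul hs1)
          (fun z hz => by have := (hs_mem z hz).1; positivity)
      · exact (contDiffOn_const.div hs1 (fun z hz => ne_of_gt (hs_mem z hz).1)).mul
          (hq2.mul (hPq.sub hPqs))
    apply hB.congr
    intro z hz
    exact hbB z.1 z.2.1 z.2.2 (hs_mem z hz).1 (hs_mem z hz).2

  ·
    intro r s q T X Y D hs hq
    have hsne : s ≠ 0 := hs.ne'
    have hqne : q ≠ 0 := hq.ne'
    have hqs : 0 < q / s := div_pos hq hs
    have hp' : ∀ x : ℝ, 0 < x → HasDerivAt p (deriv p x) x := fun x hx =>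
      (((hp.differentiableOn one_ne_zero).differentiableAt (Ioi_mem_nhds hx)).hasDerivAt)
    -- derivative in r, general
    have hrd : ∀ s' q' : ℝ, 0 < s' → 0 < q' → ∀ r' : ℝ,
        HasDerivAt (fun r'' => b r'' s' q') (q' * r' / s') r' := by
      intro s' q' hs' hq' r'
      have hfun : (fun r'' => b r'' s' q')
          = fun r'' => q' * r'' ^ 2 / (2 * s') + (1 / s') * (q' * (Pfun p q' - Pfun p (q' / s'))) :=
        funext fun r'' => hbB r'' s' q' hs' hq'
      rw [hfun]
      have H := (((hasDerivAt_pow 2 r').const_mul q').div_const (2 * s')).add_const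
        ((1 / s') * (q' * (Pfun p q' - Pfun p (q' / s'))))
      refine H.congr_deriv ?_
      field_simp
      ring
    -- E3
    have E3 : deriv (fun r' => b r' s q) r = q * r / s := (hrd s q hs hq r).deriv
    -- E_rr
    have Err : deriv (fun r' => deriv (fun r'' => b r'' s q) r') r = q / s := by
      have hfun : (fun r' => deriv (fun r'' => b r'' s q) r') = fun r' => q * r' / s :=
        funext fun r' => (hrd s q hs hq r').deriv
      rw [hfun]
      have H := (((hasDerivAt_id r).const_mul q).div_const s)
      simpa using H.deriv
    -- E_rs
    have Ers : deriv (fun s' => deriv (fun r' => b r' s' q) r) s = -(q * r) / s ^ 2 := by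
      have heq : (fun s' => deriv (fun r' => b r' s' q) r) =ᶠ[𝓝 s] fun s' => q * r / s' :=
        eventuallyEq_of_mem (Ioi_mem_nhds hs) (fun s' hs' => (hrd s' q hs' hq r).deriv)
      rw [heq.deriv_eq]
      have H := (hasDerivAt_const s (q * r)).div (hasDerivAt_id s) hsne
      have H' : HasDerivAt (fun s' => q * r / s') ((0 * s - q * r * 1) / s ^ 2) s := by
        exact H
      rw [H'.deriv]
      field_simp
      ring
    -- derivative in s, general
    have hbsd : ∀ s' q' : ℝ, 0 < s' → 0 < q' →
        HasDerivAt (fun s'' => b r s'' q')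
          (-(q' * r ^ 2) / (2 * s' ^ 2) - (q' / s' ^ 2) * (Pfun p q' - Pfun p (q' / s'))
            + p (q' / s') / s') s' := by
      intro s' q' hs' hq'
      have hs'ne : s' ≠ 0 := hs'.ne'
      have hq'ne : q' ≠ 0 := hq'.ne'
      have hcong : (fun s'' => b r s'' q') =ᶠ[𝓝 s']
          (fun s'' => q' * r ^ 2 / (2 * s'') + (1 / s'') * (q' * (Pfun p q' - Pfun p (q' / s'')))) :=
        eventuallyEq_of_mem (Ioi_mem_nhds hs') (fun x hx => hbB r x q' hx hq')
      have hqsd : HasDerivAt (fun s'' => q' / s'') ((0 * s' - q' * 1) / s' ^ 2) s' :=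
        (hasDerivAt_const s' q').div (hasDerivAt_id s') hs'ne
      have hPc : HasDerivAt (fun s'' => Pfun p (q' / s''))
          ((p (q' / s') / (q' / s') ^ 2) * ((0 * s' - q' * 1) / s' ^ 2)) s' :=
        (Pfun_hasDerivAt hp (div_pos hq' hs')).comp s' hqsd
      have h1 : HasDerivAt (fun s'' => q' * r ^ 2 / (2 * s''))
          ((0 * (2 * s') - q' * r ^ 2 * (2 * 1)) / (2 * s') ^ 2) s' :=
        (hasDerivAt_const s' (q' * r ^ 2)).div ((hasDerivAt_id s').const_mul 2)
          (by positivity)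
      have h2 : HasDerivAt (fun s'' => (1 / s'') * (q' * (Pfun p q' - Pfun p (q' / s''))))
          (((0 * s' - 1 * 1) / s' ^ 2) * (q' * (Pfun p q' - Pfun p (q' / s')))
            + (1 / s') * (q' * -((p (q' / s') / (q' / s') ^ 2) * ((0 * s' - q' * 1) / s' ^ 2)))) s' :=
        (((hasDerivAt_const s' 1).div (hasDerivAt_id s') hs'ne)).mul
          ((hPc.const_sub (Pfun p q')).const_mul q')
      have H := h1.add h2
      apply HasDerivAt.congr_of_eventuallyEq _ hcong
      refine H.congr_deriv ?_
      field_simp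
      ring
    -- E5
    have E5 : deriv (fun s' => b r s' q) s
        = -(q * r ^ 2) / (2 * s ^ 2) - (q / s ^ 2) * (Pfun p q - Pfun p (q / s))
            + p (q / s) / s := (hbsd s q hs hq).deriv
    -- E_ss
    have Ess : deriv (fun s' => deriv (fun s'' => b r s'' q) s') s
        = q * r ^ 2 / s ^ 3 + 2 * q / s ^ 3 * (Pfun p q - Pfun p (q / s))
          - 2 * p (q / s) / s ^ 2 - q * deriv p (q / s) / s ^ 3 := by
      have heq : (fun s' => deriv (fun s'' => b r s'' q) s') =ᶠ[𝓝 s]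
          (fun s' => -(q * r ^ 2) / (2 * s' ^ 2) - (q / s' ^ 2) * (Pfun p q - Pfun p (q / s'))
            + p (q / s') / s') :=
        eventuallyEq_of_mem (Ioi_mem_nhds hs) (fun s' hs' => (hbsd s' q hs' hq).deriv)
      rw [heq.deriv_eq]
      have hqsd : HasDerivAt (fun s' => q / s') ((0 * s - q * 1) / s ^ 2) s :=
        (hasDerivAt_const s q).div (hasDerivAt_id s) hsne
      have hPc : HasDerivAt (fun s' => Pfun p (q / s'))
          ((p (q / s) / (q / s) ^ 2) * ((0 * s - q * 1) / s ^ 2)) s :=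
        (Pfun_hasDerivAt hp hqs).comp s hqsd
      have hpc : HasDerivAt (fun s' => p (q / s'))
          (deriv p (q / s) * ((0 * s - q * 1) / s ^ 2)) s :=
        (hp' (q / s) hqs).comp s hqsd
      have t1 : HasDerivAt (fun s' => -(q * r ^ 2) / (2 * s' ^ 2))
          ((0 * (2 * s ^ 2) - -(q * r ^ 2) * (2 * (2 * s ^ 1))) / (2 * s ^ 2) ^ 2) s :=
        (hasDerivAt_const s (-(q * r ^ 2))).div ((hasDerivAt_pow 2 s).const_mul 2)
          (by positivity)
      have t2 : HasDerivAt (fun s' => q / s' ^ 2)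
          ((0 * s ^ 2 - q * (2 * s ^ 1)) / (s ^ 2) ^ 2) s :=
        (hasDerivAt_const s q).div (hasDerivAt_pow 2 s) (by positivity)
      have t3 := t2.mul (hPc.const_sub (Pfun p q))
      have t4 := hpc.div (hasDerivAt_id s) hsne
      have H := (t1.sub t3).add t4
      have H' : HasDerivAt
          (fun s' => -(q * r ^ 2) / (2 * s' ^ 2) - q / s' ^ 2 * (Pfun p q - Pfun p (q / s'))
            + p (q / s') / s')
          ((0 * (2 * s ^ 2) - -(q * r ^ 2) * (2 * (2 * s ^ 1))) / (2 * s ^ 2) ^ 2 -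
            ((0 * s ^ 2 - q * (2 * s ^ 1)) / (s ^ 2) ^ 2 * (Pfun p q - Pfun p (q / s)) +
              q / s ^ 2 * -(p (q / s) / (q / s) ^ 2 * ((0 * s - q * 1) / s ^ 2))) +
            (deriv p (q / s) * ((0 * s - q * 1) / s ^ 2) * s - p (q / s) * 1) / s ^ 2) s := by
        exact H
      rw [H'.deriv]
      field_simp
      ring
    -- E7
    have E7 : deriv (fun q' => b r s q') q
        = r ^ 2 / (2 * s) + (1 / s) * (Pfun p q - Pfun p (q / s))
          + p q / (q * s) - p (q / s) / q := by
      have heq : (fun q' => b r s q') =ᶠ[𝓝 q]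
          (fun q' => q' * r ^ 2 / (2 * s) + (1 / s) * (q' * (Pfun p q' - Pfun p (q' / s)))) :=
        eventuallyEq_of_mem (Ioi_mem_nhds hq) (fun q' hq' => hbB r s q' hs hq')
      rw [heq.deriv_eq]
      have uqs : HasDerivAt (fun q' => q' / s) (1 / s) q := (hasDerivAt_id q).div_const s
      have uP2 : HasDerivAt (fun q' => Pfun p (q' / s))
          ((p (q / s) / (q / s) ^ 2) * (1 / s)) q :=
        ((Pfun_hasDerivAt hp hqs).comp q uqs :)
      have u1 : HasDerivAt (fun q' => q' * r ^ 2 / (2 * s)) (1 * r ^ 2 / (2 * s)) q :=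
        ((hasDerivAt_id q).mul_const (r ^ 2)).div_const (2 * s)
      have u2 := ((hasDerivAt_id q).mul (((Pfun_hasDerivAt hp hq).sub uP2))).const_mul (1 / s)
      have H := u1.add u2
      have H' : HasDerivAt
          (fun q' => q' * r ^ 2 / (2 * s) + 1 / s * (q' * (Pfun p q' - Pfun p (q' / s))))
          (1 * r ^ 2 / (2 * s) +
            1 / s * (1 * (Pfun p q - Pfun p (q / s))
              + q * (p q / q ^ 2 - p (q / s) / (q / s) ^ 2 * (1 / s)))) q := by
        exact H
      rw [H'.deriv]
      field_simp
      ring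
    -- E6
    have E6 : deriv (fun q' => deriv (fun s' => b r s' q') s) q
        = -(r ^ 2) / (2 * s ^ 2) - (1 / s ^ 2) * (Pfun p q - Pfun p (q / s))
          - p q / (q * s ^ 2) + p (q / s) / (q * s) + deriv p (q / s) / s ^ 2 := by
      have heq : (fun q' => deriv (fun s' => b r s' q') s) =ᶠ[𝓝 q]
          (fun q' => -(q' * r ^ 2) / (2 * s ^ 2) - (q' / s ^ 2) * (Pfun p q' - Pfun p (q' / s))
            + p (q' / s) / s) :=
        eventuallyEq_of_mem (Ioi_mem_nhds hq) (fun q' hq' => (hbsd s q' hs hq').deriv)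
      rw [heq.deriv_eq]
      have uqs : HasDerivAt (fun q' => q' / s) (1 / s) q := (hasDerivAt_id q).div_const s
      have uP2 : HasDerivAt (fun q' => Pfun p (q' / s))
          ((p (q / s) / (q / s) ^ 2) * (1 / s)) q :=
        ((Pfun_hasDerivAt hp hqs).comp q uqs :)
      have w1 : HasDerivAt (fun q' => -(q' * r ^ 2) / (2 * s ^ 2))
          (-(1 * r ^ 2) / (2 * s ^ 2)) q :=
        (((hasDerivAt_id q).mul_const (r ^ 2)).neg).div_const (2 * s ^ 2)
      have w2 : HasDerivAt (fun q' => q' / s ^ 2) (1 / s ^ 2) q :=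
        (hasDerivAt_id q).div_const (s ^ 2)
      have w3 := w2.mul ((Pfun_hasDerivAt hp hq).sub uP2)
      have w4 := ((hp' (q / s) hqs).comp q uqs).div_const s
      have H := (w1.sub w3).add w4
      have H' : HasDerivAt
          (fun q' => -(q' * r ^ 2) / (2 * s ^ 2) - q' / s ^ 2 * (Pfun p q' - Pfun p (q' / s))
            + p (q' / s) / s)
          (-(1 * r ^ 2) / (2 * s ^ 2) -
            (1 / s ^ 2 * (Pfun p q - Pfun p (q / s))
              + q / s ^ 2 * (p q / q ^ 2 - p (q / s) / (q / s) ^ 2 * (1 / s))) +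
            deriv p (q / s) * (1 / s) / s) q := by
        exact H
      rw [H'.deriv]
      field_simp
      ring
    rw [Err, Ers, E3, Ess, E5, E6, E7]
    field_simp
    ring
end

section
/- Let p : (0,∞) → ℝ be C¹ and let P be an antiderivative of p on (0,∞). Define b(r,s,q) = (1/2)(rq/s)² − P(q/s) for r ∈ ℝ, s > 0, q > 0. Then b is C² and for all r ∈ ℝ, s > 0, q > 0 and all real numbers T, X, Y, D: b_rr·T + 2(b_rs + b_r/s)·X + (b_ss + 2b_s/s)·Y + D·(b_sq + b_q/s) = (q²/s³)·[ s·T − 2r·X − (1/s)(p'(q/s) − r²)·Y + (D/q)(p'(q/s) − r²) ], where all partial derivatives of b are evaluated at (r,s,q). -/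
/-- For `b(r,s,q) = (1/2)(rq/s)² − P(q/s)` with `P` an antiderivative of `p`
on `(0,∞)`, `b` is C² on `ℝ × (0,∞) × (0,∞)` and the Euler–Lagrange expression
`b_rr T + 2(b_rs + b_r/s) X + (b_ss + 2b_s/s) Y + D (b_sq + b_q/s)` equals
`(q²/s³)(s T − 2r X − (1/s)(p'(q/s) − r²) Y + (D/q)(p'(q/s) − r²))`: the extremals of the
corresponding action are the solutions of the particle-path form of the nonlinear wave
equation. -/
theorem stmt18
    (p P : ℝ → ℝ) (b : ℝ → ℝ → ℝ → ℝ)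
    (hp : ContDiffOn ℝ 1 p (Set.Ioi 0))
    (hP : ∀ y : ℝ, 0 < y → HasDerivAt P (p y) y)
    (hbdef : ∀ r s q : ℝ, b r s q = (1 / 2) * (r * q / s) ^ 2 - P (q / s)) :
    ContDiffOn ℝ 2 (fun Z : ℝ × ℝ × ℝ => b Z.1 Z.2.1 Z.2.2)
      (Set.univ ×ˢ Set.Ioi 0 ×ˢ Set.Ioi 0)
    ∧ ∀ r s q T X Y D : ℝ, 0 < s → 0 < q →
      deriv (fun r' => deriv (fun r'' => b r'' s q) r') r * T
      + 2 * (deriv (fun s' => deriv (fun r' => b r' s' q) r) s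
          + deriv (fun r' => b r' s q) r / s) * X
      + (deriv (fun s' => deriv (fun s'' => b r s'' q) s') s
          + 2 * deriv (fun s' => b r s' q) s / s) * Y
      + D * (deriv (fun q' => deriv (fun s' => b r s' q') s) q
          + deriv (fun q' => b r s q') q / s)
      = (q ^ 2 / s ^ 3) * (s * T - 2 * r * X
          - (1 / s) * (deriv p (q / s) - r ^ 2) * Y
          + (D / q) * (deriv p (q / s) - r ^ 2)) := by
  -- p has a derivative everywhere on (0,∞)
  have hpd : ∀ y : ℝ, 0 < y → HasDerivAt p (deriv p y) y := fun y hy =>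
    (((hp.differentiableOn one_ne_zero).differentiableAt (Ioi_mem_nhds hy))).hasDerivAt
  -- P is C² on (0,∞)
  have hPC2 : ContDiffOn ℝ 2 P (Set.Ioi 0) := by
    rw [show (2 : WithTop ℕ∞) = 1 + 1 by norm_num,
      contDiffOn_succ_iff_deriv_of_isOpen isOpen_Ioi]
    exact ⟨fun y hy => ((hP y hy).differentiableAt).differentiableWithinAt, by simp,
      hp.congr fun y hy => (hP y hy).deriv⟩
  -- the partial derivatives of b
  have hbr : ∀ (r s q : ℝ), s ≠ 0 → HasDerivAt (fun r' => b r' s q) (r * q ^ 2 / s ^ 2) r := by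
    intro r s q hs
    have h2 : (fun r' => b r' s q) = fun r' => (1 / 2) * (r' * q / s) ^ 2 - P (q / s) :=
      funext fun r' => hbdef r' s q
    rw [h2]
    have h1 := ((((hasDerivAt_id r).mul_const q).div_const s).pow 2).const_mul
      ((1 : ℝ) / 2) |>.sub_const (P (q / s))
    refine h1.congr_deriv ?_
    simp only [id, show (2 : ℕ) - 1 = 1 from rfl, pow_one]
    field_simp
    ring
  have hbs : ∀ (r s q : ℝ), 0 < s → 0 < q →
      HasDerivAt (fun s' => b r s' q) (-(r ^ 2 * q ^ 2) / s ^ 3 + p (q / s) * q / s ^ 2) s := by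
    intro r s q hs hq
    have hmul : q * s⁻¹ = q / s := (div_eq_mul_inv q s).symm
    have h2 : (fun s' => b r s' q) = fun s' => (1 / 2) * (r * q * s'⁻¹) ^ 2 - P (q * s'⁻¹) := by
      funext s'
      rw [hbdef]
      simp only [div_eq_mul_inv, mul_assoc]
    rw [h2]
    have hinv : HasDerivAt (fun s' : ℝ => s'⁻¹) (-(s ^ 2)⁻¹) s := hasDerivAt_inv hs.ne'
    have hq1 : HasDerivAt (fun s' : ℝ => q * s'⁻¹) (q * -(s ^ 2)⁻¹) s := hinv.const_mul q
    have hPs : HasDerivAt P (p (q * s⁻¹)) (q * s⁻¹) := hP _ (by positivity)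
    have hcomp := hPs.comp s hq1
    have h1 := (((hinv.const_mul (r * q)).pow 2).const_mul ((1 : ℝ) / 2)).sub
      (by simpa [Function.comp_def] using hcomp)
    refine h1.congr_deriv ?_
    rw [hmul]
    have hs0 : s ≠ 0 := hs.ne'
    simp only [show (2 : ℕ) - 1 = 1 from rfl, pow_one]
    field_simp
    ring
  have hbq : ∀ (r s q : ℝ), 0 < s → 0 < q →
      HasDerivAt (fun q' => b r s q') (r ^ 2 * q / s ^ 2 - p (q / s) / s) q := by
    intro r s q hs hq
    have hmul : q * s⁻¹ = q / s := (div_eq_mul_inv q s).symm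
    have h2 : (fun q' => b r s q') = fun q' => (1 / 2) * (r * (q' * s⁻¹)) ^ 2 - P (q' * s⁻¹) := by
      funext q'
      rw [hbdef]
      simp only [div_eq_mul_inv, mul_assoc]
    rw [h2]
    have hq1 : HasDerivAt (fun q' : ℝ => q' * s⁻¹) (1 * s⁻¹) q := (hasDerivAt_id q).mul_const s⁻¹
    have hPs : HasDerivAt P (p (q * s⁻¹)) (q * s⁻¹) := hP _ (by positivity)
    have hcomp := hPs.comp q hq1
    have h1 := (((hq1.const_mul r).pow 2).const_mul ((1 : ℝ) / 2)).sub
      (by simpa [Function.comp_def] using hcomp)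
    refine h1.congr_deriv ?_
    rw [hmul]
    have hs0 : s ≠ 0 := hs.ne'
    simp only [show (2 : ℕ) - 1 = 1 from rfl, pow_one]
    field_simp
    ring
  refine ⟨?_, ?_⟩
  · -- smoothness
    have hg : ContDiffOn ℝ 2 (fun Z : ℝ × ℝ × ℝ => Z.2.2 / Z.2.1)
        (Set.univ ×ˢ Set.Ioi 0 ×ˢ Set.Ioi 0) := by
      apply ContDiffOn.div
      · exact (contDiff_snd.comp contDiff_snd).contDiffOn
      · exact (contDiff_fst.comp contDiff_snd).contDiffOn
      · rintro ⟨r, s, q⟩ ⟨-, hs, -⟩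
        exact ne_of_gt hs
    have hmaps : Set.MapsTo (fun Z : ℝ × ℝ × ℝ => Z.2.2 / Z.2.1)
        (Set.univ ×ˢ Set.Ioi 0 ×ˢ Set.Ioi 0) (Set.Ioi 0) := by
      rintro ⟨r, s, q⟩ ⟨-, hs, hq⟩
      exact div_pos (Set.mem_Ioi.mp hq) (Set.mem_Ioi.mp hs)
    have h1 : ContDiffOn ℝ 2 (fun Z : ℝ × ℝ × ℝ => (1 / 2) * (Z.1 * Z.2.2 / Z.2.1) ^ 2)
        (Set.univ ×ˢ Set.Ioi 0 ×ˢ Set.Ioi 0) := by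
      apply ContDiffOn.mul contDiffOn_const
      apply ContDiffOn.pow
      apply ContDiffOn.div
      · exact (contDiff_fst.mul (contDiff_snd.comp contDiff_snd)).contDiffOn
      · exact (contDiff_fst.comp contDiff_snd).contDiffOn
      · rintro ⟨r, s, q⟩ ⟨-, hs, -⟩
        exact ne_of_gt hs
    exact (h1.sub (hPC2.comp hg hmaps)).congr fun Z hZ => hbdef Z.1 Z.2.1 Z.2.2
  · intro r s q T X Y D hs hq
    have hmul : q * s⁻¹ = q / s := (div_eq_mul_inv q s).symm
    have hpq : HasDerivAt p (deriv p (q / s)) (q / s) := hpd _ (div_pos hq hs)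
    have hpq' : HasDerivAt p (deriv p (q / s)) (q * s⁻¹) := by rw [hmul]; exact hpq
    have d_r : deriv (fun r' => b r' s q) r = r * q ^ 2 / s ^ 2 := (hbr r s q hs.ne').deriv
    have d_s : deriv (fun s' => b r s' q) s
        = -(r ^ 2 * q ^ 2) / s ^ 3 + p (q / s) * q / s ^ 2 := (hbs r s q hs hq).deriv
    have d_q : deriv (fun q' => b r s q') q
        = r ^ 2 * q / s ^ 2 - p (q / s) / s := (hbq r s q hs hq).deriv
    have d_rr : deriv (fun r' => deriv (fun r'' => b r'' s q) r') r = q ^ 2 / s ^ 2 := by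
      have hfun : (fun r' => deriv (fun r'' => b r'' s q) r') = fun r' => r' * q ^ 2 / s ^ 2 :=
        funext fun r' => (hbr r' s q hs.ne').deriv
      rw [hfun]
      have this := (((hasDerivAt_id r).mul_const (q ^ 2)).div_const (s ^ 2)).deriv; simp only [id_eq, one_mul] at this; exact this
    have d_rs : deriv (fun s' => deriv (fun r' => b r' s' q) r) s = -(2 * r * q ^ 2) / s ^ 3 := by
      have he : (fun s' => deriv (fun r' => b r' s' q) r) =ᶠ[nhds s]
          fun s' => r * q ^ 2 * (s' ^ 2)⁻¹ := by
        filter_upwards [Ioi_mem_nhds hs] with s' hs'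
        rw [(hbr r s' q (ne_of_gt hs')).deriv, div_eq_mul_inv]
      rw [he.deriv_eq,
        HasDerivAt.deriv (f := fun s' => r * q ^ 2 * (s' ^ 2)⁻¹)
          (((hasDerivAt_pow 2 s).inv (by positivity)).const_mul (r * q ^ 2))]
      field_simp
      ring
    have d_ss : deriv (fun s' => deriv (fun s'' => b r s'' q) s') s
        = 3 * r ^ 2 * q ^ 2 / s ^ 4 - deriv p (q / s) * q ^ 2 / s ^ 4
          - 2 * p (q / s) * q / s ^ 3 := by
      have he : (fun s' => deriv (fun s'' => b r s'' q) s') =ᶠ[nhds s]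
          fun s' => -(r ^ 2 * q ^ 2) * (s' ^ 3)⁻¹ + p (q * s'⁻¹) * (q * (s' ^ 2)⁻¹) := by
        filter_upwards [Ioi_mem_nhds hs] with s' hs'
        rw [(hbs r s' q hs' hq).deriv]
        simp only [div_eq_mul_inv]
        ring
      rw [he.deriv_eq]
      have hinv : HasDerivAt (fun s' : ℝ => s'⁻¹) (-(s ^ 2)⁻¹) s := hasDerivAt_inv hs.ne'
      have hq1 : HasDerivAt (fun s' : ℝ => q * s'⁻¹) (q * -(s ^ 2)⁻¹) s := hinv.const_mul q
      have hps : HasDerivAt (fun s' => p (q * s'⁻¹))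
          (deriv p (q / s) * (q * -(s ^ 2)⁻¹)) s := by
        simpa [Function.comp_def] using hpq'.comp s hq1
      have h3a := ((hasDerivAt_pow 3 s).inv (by positivity)).const_mul (-(r ^ 2 * q ^ 2))
      have h3b := hps.mul (((hasDerivAt_pow 2 s).inv (by positivity)).const_mul q)
      rw [HasDerivAt.deriv (f := fun s' => -(r ^ 2 * q ^ 2) * (s' ^ 3)⁻¹
          + p (q * s'⁻¹) * (q * (s' ^ 2)⁻¹)) (h3a.add h3b), hmul]
      simp only [Pi.inv_apply]
      field_simp
      ring
    have d_sq : deriv (fun q' => deriv (fun s' => b r s' q') s) q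
        = -(2 * r ^ 2 * q) / s ^ 3 + deriv p (q / s) * q / s ^ 3 + p (q / s) / s ^ 2 := by
      have he : (fun q' => deriv (fun s' => b r s' q') s) =ᶠ[nhds q]
          fun q' => -(r ^ 2) * (s ^ 3)⁻¹ * q' ^ 2 + p (q' * s⁻¹) * (q' * (s ^ 2)⁻¹) := by
        filter_upwards [Ioi_mem_nhds hq] with q' hq'
        rw [(hbs r s q' hs hq').deriv]
        simp only [div_eq_mul_inv]
        ring
      rw [he.deriv_eq]
      have hq1 : HasDerivAt (fun q' : ℝ => q' * s⁻¹) (1 * s⁻¹) q :=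
        (hasDerivAt_id q).mul_const s⁻¹
      have hps : HasDerivAt (fun q' => p (q' * s⁻¹)) (deriv p (q / s) * (1 * s⁻¹)) q := by
        simpa [Function.comp_def] using hpq'.comp q hq1
      have h4a := (hasDerivAt_pow 2 q).const_mul (-(r ^ 2) * (s ^ 3)⁻¹)
      have h4b := hps.mul ((hasDerivAt_id' q).mul_const ((s ^ 2)⁻¹))
      rw [HasDerivAt.deriv (f := fun q' => -(r ^ 2) * (s ^ 3)⁻¹ * q' ^ 2
          + p (q' * s⁻¹) * (q' * (s ^ 2)⁻¹)) (h4a.add h4b), hmul]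
      field_simp
      ring
    rw [d_rr, d_rs, d_r, d_ss, d_s, d_sq, d_q]
    field_simp
    ring
end

section
/- Let b : ℝ → ℝ be C² with b' > 0 on an interval J, and set g := √(b') on J, so g is C¹ and positive. Let u : ℝ × [0,∞) → J be C¹ and let γ : ℝ × [0,∞) → ℝ be C² with γ(x,0) = x, ∂ₓγ > 0, and ∂ₜγ(x,t) = u(γ(x,t), t) for all (x,t). Set u₀(x) := ∂ₜγ(x,0). If b'(∂ₜγ(x,t))·(∂ₓγ(x,t))² = b'(u₀(x)) for all (x,t), then at every point of the form (γ(x,t), t): ∂ₜ( g(u) ) + ∂ₓ( u · g(u) ) = 0. -/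
open Set

set_option maxHeartbeats 1000000 in
/-- Let `g := √(b')` (positive and C¹ on the interval `J` where `b' > 0`).
If `γ` is the Lagrangian flow of `u` (`γ(x,0) = x`, `γ_x > 0`, `γ_t = u ∘ γ`) satisfying the
integrated geodesic equation `b'(γ_t) γ_x² = b'(u₀)` with `u₀ = γ_t(·,0)`, then at every
point `(γ(x,t), t)` the conservation law `(g(u))_t + (u g(u))_x = 0` holds. -/
theorem stmt19
    (b : ℝ → ℝ) (J : Set ℝ) (u γ : ℝ → ℝ → ℝ)
    (hb : ContDiff ℝ 2 b)
    (hJ : J.OrdConnected)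
    (hb' : ∀ y ∈ J, 0 < deriv b y)
    (hu : ContDiff ℝ 1 (Function.uncurry u))
    (huJ : ∀ x t : ℝ, 0 ≤ t → u x t ∈ J)
    (hγ : ContDiff ℝ 2 (Function.uncurry γ))
    (hinit : ∀ x : ℝ, γ x 0 = x)
    (hγx : ∀ x t : ℝ, 0 ≤ t → 0 < deriv (fun y => γ y t) x)
    (hflow : ∀ x t : ℝ, 0 ≤ t → deriv (γ x) t = u (γ x t) t)
    (hgeo : ∀ x t : ℝ, 0 ≤ t →
      deriv b (deriv (γ x) t) * (deriv (fun y => γ y t) x) ^ 2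
        = deriv b (deriv (γ x) 0)) :
    ∀ x t : ℝ, 0 ≤ t →
      deriv (fun s => Real.sqrt (deriv b (u (γ x t) s))) t
        + deriv (fun y => u y t * Real.sqrt (deriv b (u y t))) (γ x t) = 0 := by
  intro x t ht
  -- notations
  set φ : ℝ × ℝ → ℝ := Function.uncurry γ with hφdef
  set U : ℝ × ℝ → ℝ := Function.uncurry u with hUdef
  have hφd : Differentiable ℝ φ := hγ.differentiable (by norm_num)
  have hDφd : Differentiable ℝ (fderiv ℝ φ) :=
    (hγ.fderiv_right (m := 1) (by norm_num)).differentiable (by norm_num)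
  have hUd : Differentiable ℝ U := hu.differentiable (by norm_num)
  have hb'' : Differentiable ℝ (deriv b) := by
    have h2 : ContDiff ℝ (1 + 1) b := by norm_num at hb ⊢; exact hb
    exact ((contDiff_succ_iff_deriv.mp h2).2.2).differentiable (by norm_num)
  -- basic partial-derivative facts for γ
  have hx_has : ∀ y s : ℝ, HasDerivAt (fun y' => γ y' s) (fderiv ℝ φ (y, s) (1, 0)) y := by
    intro y s
    have c : HasDerivAt (fun y' : ℝ => ((y' : ℝ), s)) ((1 : ℝ), (0 : ℝ)) y :=
      HasDerivAt.prodMk (hasDerivAt_id y) (hasDerivAt_const y s)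
    exact (hφd (y, s)).hasFDerivAt.comp_hasDerivAt y c
  have ht_has : ∀ y s : ℝ, HasDerivAt (γ y) (fderiv ℝ φ (y, s) (0, 1)) s := by
    intro y s
    have c : HasDerivAt (fun s' : ℝ => ((y : ℝ), s')) ((0 : ℝ), (1 : ℝ)) s :=
      HasDerivAt.prodMk (hasDerivAt_const s y) (hasDerivAt_id s)
    exact (hφd (y, s)).hasFDerivAt.comp_hasDerivAt s c
  -- the density ρ = √(b' ∘ u)
  set ρ : ℝ × ℝ → ℝ := fun p => Real.sqrt (deriv b (U p)) with hρdef
  have hρdiff : ∀ p : ℝ × ℝ, 0 ≤ p.2 → DifferentiableAt ℝ ρ p := by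
    intro p hp
    have h0 : 0 < deriv b (U p) := hb' _ (huJ p.1 p.2 hp)
    have h3 : DifferentiableAt ℝ Real.sqrt (deriv b (U p)) :=
      (Real.hasDerivAt_sqrt h0.ne').differentiableAt
    exact (h3.comp (U p) (hb'' (U p))).comp p (hUd p)
  -- abbreviations at the base point
  set X : ℝ := γ x t with hXdef
  set P : ℝ × ℝ := (X, t) with hPdef
  set L : ℝ × ℝ →L[ℝ] ℝ := fderiv ℝ ρ P with hLdef
  have hL : HasFDerivAt ρ L P := (hρdiff P ht).hasFDerivAt
  set LU : ℝ × ℝ →L[ℝ] ℝ := fderiv ℝ U P with hLUdef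
  have hLU : HasFDerivAt U LU P := (hUd P).hasFDerivAt
  set A : ℝ := fderiv ℝ φ (x, t) (1, 0) with hAdef
  have hAderiv : deriv (fun y => γ y t) x = A := (hx_has x t).deriv
  have hApos : 0 < A := hAderiv ▸ hγx x t ht
  set uP : ℝ := u X t with huPdef
  set ρP : ℝ := Real.sqrt (deriv b uP) with hρPdef
  have hρPval : ρ P = ρP := rfl
  -- first goal term
  have hterm1 : deriv (fun s => Real.sqrt (deriv b (u (γ x t) s))) t = L (0, 1) := by
    have c : HasDerivAt (fun s : ℝ => ((X : ℝ), s)) ((0 : ℝ), (1 : ℝ)) t :=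
      HasDerivAt.prodMk (hasDerivAt_const t X) (hasDerivAt_id t)
    exact (hL.comp_hasDerivAt t c).deriv
  -- second goal term
  have hU_x : HasDerivAt (fun y => u y t) (LU (1, 0)) X := by
    have c : HasDerivAt (fun y : ℝ => ((y : ℝ), t)) ((1 : ℝ), (0 : ℝ)) X :=
      HasDerivAt.prodMk (hasDerivAt_id X) (hasDerivAt_const X t)
    exact hLU.comp_hasDerivAt X c
  have hρ_x : HasDerivAt (fun y => Real.sqrt (deriv b (u y t))) (L (1, 0)) X := by
    have c : HasDerivAt (fun y : ℝ => ((y : ℝ), t)) ((1 : ℝ), (0 : ℝ)) X :=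
      HasDerivAt.prodMk (hasDerivAt_id X) (hasDerivAt_const X t)
    exact hL.comp_hasDerivAt X c
  have hterm2 : deriv (fun y => u y t * Real.sqrt (deriv b (u y t))) (γ x t)
      = LU (1, 0) * ρP + uP * L (1, 0) := (hU_x.mul hρ_x).deriv
  -- second derivative of φ and symmetry
  set D2 := fderiv ℝ (fderiv ℝ φ) (x, t) with hD2def
  have hD2 : HasFDerivAt (fderiv ℝ φ) D2 (x, t) := (hDφd (x, t)).hasFDerivAt
  have hsymm : D2 (1, 0) (0, 1) = D2 (0, 1) (1, 0) :=
    second_derivative_symmetric (fun p => (hφd p).hasFDerivAt) hD2 (1, 0) (0, 1)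
  -- t-derivative of γ_x
  have hγxx_der : HasDerivAt (fun s => deriv (fun y => γ y s) x) (D2 (0, 1) (1, 0)) t := by
    have c : HasDerivAt (fun s : ℝ => ((x : ℝ), s)) ((0 : ℝ), (1 : ℝ)) t :=
      HasDerivAt.prodMk (hasDerivAt_const t x) (hasDerivAt_id t)
    have h1 : HasDerivAt (fun s : ℝ => fderiv ℝ φ (x, s)) (D2 (0, 1)) t :=
      hD2.comp_hasDerivAt t c
    have h2 := h1.clm_apply (hasDerivAt_const t ((1 : ℝ), (0 : ℝ)))
    simp only [map_zero, add_zero] at h2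
    have heq : (fun s => deriv (fun y => γ y s) x)
        = fun s => fderiv ℝ φ (x, s) (1, 0) := funext fun s => (hx_has x s).deriv
    rw [heq]
    simpa using h2
  -- x-derivative of γ_t via the flow equation
  have hmixed : D2 (1, 0) (0, 1) = A * LU (1, 0) := by
    have c : HasDerivAt (fun y : ℝ => ((y : ℝ), t)) ((1 : ℝ), (0 : ℝ)) x :=
      HasDerivAt.prodMk (hasDerivAt_id x) (hasDerivAt_const x t)
    have h1 : HasDerivAt (fun y : ℝ => fderiv ℝ φ (y, t)) (D2 (1, 0)) x :=
      hD2.comp_hasDerivAt x c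
    have h2 := h1.clm_apply (hasDerivAt_const x ((0 : ℝ), (1 : ℝ)))
    simp only [map_zero, add_zero] at h2
    have heq : (fun y : ℝ => fderiv ℝ φ (y, t) (0, 1)) = fun y => u (γ y t) t :=
      funext fun y => by rw [← (ht_has y t).deriv]; exact hflow y t ht
    rw [heq] at h2
    have cγ : HasDerivAt (fun y : ℝ => ((γ y t : ℝ), t)) ((A : ℝ), (0 : ℝ)) x :=
      HasDerivAt.prodMk (hx_has x t) (hasDerivAt_const x t)
    have h3 : HasDerivAt (fun y => u (γ y t) t) (LU (A, 0)) x :=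
      by have h := hLU.comp_hasDerivAt x cγ; exact h
    have h4 : D2 (1, 0) (0, 1) = LU (A, 0) := h2.unique h3
    have h5 : ((A : ℝ), (0 : ℝ)) = A • ((1 : ℝ), (0 : ℝ)) := by simp
    rw [h4, h5, map_smul]; rfl
  -- derivative along the flow of ρ∘γ
  have hcurve : HasDerivAt (fun s => ((γ x s : ℝ), s)) ((uP : ℝ), (1 : ℝ)) t := by
    have h0 : fderiv ℝ φ (x, t) (0, 1) = uP := by
      rw [← (ht_has x t).deriv]; exact hflow x t ht
    have := HasDerivAt.prodMk (ht_has x t) (hasDerivAt_id t)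
    rwa [h0] at this
  have hρcomp : HasDerivAt (fun s => ρ (γ x s, s)) (L (uP, 1)) t :=
    HasFDerivAt.comp_hasDerivAt (f := fun s => ((γ x s : ℝ), s)) t hL hcurve
  -- the conserved quantity F
  set C : ℝ := Real.sqrt (deriv b (deriv (γ x) 0)) with hCdef
  set F : ℝ → ℝ := fun s => ρ (γ x s, s) * deriv (fun y => γ y s) x with hFdef
  have hFconst : ∀ s ∈ Ici (0 : ℝ), F s = C := by
    intro s hs
    have hs' : (0 : ℝ) ≤ s := hs
    have hgs := hgeo x s hs'
    rw [hflow x s hs'] at hgs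
    have hpos : 0 < deriv b (u (γ x s) s) := hb' _ (huJ _ _ hs')
    have hax : 0 < deriv (fun y => γ y s) x := hγx x s hs'
    have : F s = Real.sqrt (deriv b (u (γ x s) s) * (deriv (fun y => γ y s) x) ^ 2) := by
      rw [Real.sqrt_mul hpos.le, Real.sqrt_sq hax.le]; rfl
    rw [this, hgs]
  have hF : HasDerivAt F (L (uP, 1) * deriv (fun y => γ y t) x + ρ (γ x t, t) * (D2 (0, 1) (1, 0))) t :=
    hρcomp.mul hγxx_der
  have hUD : UniqueDiffWithinAt ℝ (Ici (0 : ℝ)) t := uniqueDiffOn_Ici 0 t ht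
  have hFW : HasDerivWithinAt F 0 (Ici (0 : ℝ)) t :=
    (hasDerivWithinAt_const t (Ici (0 : ℝ)) C).congr hFconst (hFconst t ht)
  have hzero : L (uP, 1) * deriv (fun y => γ y t) x + ρ (γ x t, t) * (D2 (0, 1) (1, 0)) = 0 :=
    ((hF.hasDerivWithinAt (s := Ici (0 : ℝ))).derivWithin hUD).symm.trans (hFW.derivWithin hUD)
  -- assemble
  have hsplit : L (uP, 1) = uP * L (1, 0) + L (0, 1) := by
    have h5 : ((uP : ℝ), (1 : ℝ)) = uP • ((1 : ℝ), (0 : ℝ)) + ((0 : ℝ), (1 : ℝ)) := by simp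
    rw [h5, map_add, map_smul]; rfl
  have hρPP : ρ (γ x t, t) = ρP := rfl
  rw [hAderiv, hρPP, hsplit, ← hsymm, hmixed] at hzero
  -- hzero : (uP * L (1,0) + L (0,1)) * A + ρP * (A * LU (1,0)) = 0
  have hfact : (L (0, 1) + (LU (1, 0) * ρP + uP * L (1, 0))) * A = 0 := by
    linear_combination hzero
  rw [hterm1, hterm2]
  rcases mul_eq_zero.mp hfact with h | h
  · exact h
  · exact absurd h hApos.ne'
end
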